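/- Let M be a real matrix and p a univariate real polynomial with p(0) = 0 (or more generally any polynomial, accounting for the constant term via the all-ones matrix). Define p(M) entrywise by p(M)[x,y] = p(M[x,y]). Then br(p(M)) ≤ br(M)^{deg(p)} · deg(p), where br denotes blocky rank over the reals. -/

import Mathlib

open Matrix MeasureTheory

/-- A blocky matrix: its support is a disjoint union of combinatorial rectangles,
with value 1 on the support and 0 elsewhere. -/
def IsBlocky {F : Type*} [Field F] {m n : Type*} (M : Matrix m n F) : Prop :=
  ∃ (k : ℕ) (S : Fin k → Finset m) (T : Fin k → Finset n),
    (∀ a b, a ≠ b → Disjoint (S a) (S b)) ∧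
    (∀ a b, a ≠ b → Disjoint (T a) (T b)) ∧
    (∀ i j, (∃ l, i ∈ S l ∧ j ∈ T l) → M i j = 1) ∧
    (∀ i j, (¬ ∃ l, i ∈ S l ∧ j ∈ T l) → M i j = 0)

/-- A spiky matrix: the entrywise product of a blocky matrix and a rank-one matrix. -/
def IsSpiky {F : Type*} [Field F] {m n : Type*} (M : Matrix m n F) : Prop :=
  ∃ (B : Matrix m n F) (u : m → F) (v : n → F),
    IsBlocky B ∧ ∀ i j, M i j = B i j * (u i * v j)

/-- The spiky rank: minimum number of spiky matrices summing to `M`. -/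
noncomputable def spikyRank {F : Type*} [Field F] {m n : Type*} (M : Matrix m n F) : ℕ :=
  sInf {r | ∃ f : Fin r → Matrix m n F, (∀ i, IsSpiky (f i)) ∧ ∑ i, f i = M}

/-- The blocky rank: minimum number of blocky matrices whose linear combination equals `M`. -/
noncomputable def blockyRank {F : Type*} [Field F] {m n : Type*} (M : Matrix m n F) : ℕ :=
  sInf {r | ∃ (f : Fin r → Matrix m n F) (c : Fin r → F),
    (∀ i, IsBlocky (f i)) ∧ ∑ i, c i • f i = M}

/-- Sparsity: the number of nonzero entries of a matrix. -/
noncomputable def matSparsity {F : Type*} [Zero F] {m n : Type*} (M : Matrix m n F) : ℕ :=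
  {p : m × n | M p.1 p.2 ≠ 0}.ncard

/-- Rank-`r` rigidity: minimum number of entries that must be changed to bring the rank
down to `r`. -/
noncomputable def rigidity {F : Type*} [Field F] {N : ℕ}
    (M : Matrix (Fin N) (Fin N) F) (r : ℕ) : ℕ :=
  sInf {s | ∃ A C : Matrix (Fin N) (Fin N) F, M = A + C ∧ A.rank ≤ r ∧ matSparsity C ≤ s}

/-- Sign spiky rank: minimum spiky rank over real matrices with the same sign pattern. -/
noncomputable def signSpikyRank {m n : Type*} (M : Matrix m n ℝ) : ℕ :=
  sInf {r | ∃ A : Matrix m n ℝ,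
    (∀ i j, Real.sign (A i j) = Real.sign (M i j)) ∧ spikyRank A ≤ r}

/-- Blocky cover number: minimum number of blocky matrices whose supports' union is
exactly the set of 1-entries of the Boolean matrix `M`. -/
noncomputable def blockyCover {m n : Type*} (M : Matrix m n ℝ) : ℕ :=
  sInf {k | ∃ f : Fin k → Matrix m n ℝ, (∀ l, IsBlocky (f l)) ∧
    ∀ i j, M i j = 1 ↔ ∃ l, f l i j = 1}
section Aux
variable {F : Type*} [Field F] {m n : Type*} [DecidableEq m] [DecidableEq n]

lemma isBlocky_mul {A B : Matrix m n F} (hA : IsBlocky A) (hB : IsBlocky B) :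
    IsBlocky (fun i j => A i j * B i j : Matrix m n F) := by
  obtain ⟨k, S, T, hS, hT, h1, h0⟩ := hA
  obtain ⟨k', S', T', hS', hT', h1', h0'⟩ := hB
  refine ⟨k * k', fun l => S (finProdFinEquiv.symm l).1 ∩ S' (finProdFinEquiv.symm l).2,
    fun l => T (finProdFinEquiv.symm l).1 ∩ T' (finProdFinEquiv.symm l).2, ?_, ?_, ?_, ?_⟩
  · intro x y hxy
    by_cases hc : (finProdFinEquiv.symm x).1 = (finProdFinEquiv.symm y).1
    · have : (finProdFinEquiv.symm x).2 ≠ (finProdFinEquiv.symm y).2 := by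
        intro h2; exact (fun hh => hxy (finProdFinEquiv.symm.injective hh)) (Prod.ext hc h2)
      exact Disjoint.mono Finset.inter_subset_right Finset.inter_subset_right (hS' _ _ this)
    · exact Disjoint.mono Finset.inter_subset_left Finset.inter_subset_left (hS _ _ hc)
  · intro x y hxy
    by_cases hc : (finProdFinEquiv.symm x).1 = (finProdFinEquiv.symm y).1
    · have : (finProdFinEquiv.symm x).2 ≠ (finProdFinEquiv.symm y).2 := by
        intro h2; exact hxy (finProdFinEquiv.symm.injective (Prod.ext hc h2))
      exact Disjoint.mono Finset.inter_subset_right Finset.inter_subset_right (hT' _ _ this)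
    · exact Disjoint.mono Finset.inter_subset_left Finset.inter_subset_left (hT _ _ hc)
  · rintro i j ⟨l, hi, hj⟩
    simp only [Finset.mem_inter] at hi hj
    show A i j * B i j = 1
    rw [h1 i j ⟨_, hi.1, hj.1⟩, h1' i j ⟨_, hi.2, hj.2⟩, one_mul]
  · intro i j hne
    by_contra hz
    have hA0 : A i j ≠ 0 := fun h => hz (by simp [h])
    have hB0 : B i j ≠ 0 := fun h => hz (by simp [h])
    obtain ⟨l, hl1, hl2⟩ := not_not.mp (fun h => hA0 (h0 i j h))
    obtain ⟨l', hl1', hl2'⟩ := not_not.mp (fun h => hB0 (h0' i j h))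
    exact hne ⟨finProdFinEquiv (l, l'), by simp [hl1, hl1', hl2, hl2']⟩

end Aux

section Aux2
variable {F : Type*} [Field F] {m n : Type*}

lemma blockyRank_le {M : Matrix m n F} {r : ℕ} (f : Fin r → Matrix m n F) (c : Fin r → F)
    (hf : ∀ i, IsBlocky (f i)) (h : ∑ i, c i • f i = M) : blockyRank M ≤ r :=
  Nat.sInf_le ⟨f, c, hf, h⟩

lemma isBlocky_single [DecidableEq m] [DecidableEq n] (i : m) (j : n) :
    IsBlocky (fun x y => if x = i ∧ y = j then (1:F) else 0 : Matrix m n F) := by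
  refine ⟨1, fun _ => {i}, fun _ => {j}, fun a b h => absurd (Subsingleton.elim a b) h,
    fun a b h => absurd (Subsingleton.elim a b) h, ?_, ?_⟩
  · rintro x y ⟨l, hx, hy⟩
    simp only [Finset.mem_singleton] at hx hy
    simp [hx, hy]
  · intro x y h
    push_neg at h
    have := h 0
    simp only [Finset.mem_singleton] at this
    show (if x = i ∧ y = j then (1:F) else 0) = 0
    rw [if_neg]
    rintro ⟨rfl, rfl⟩
    exact this rfl rfl

lemma exists_blocky_decomp [Fintype m] [Fintype n] [DecidableEq m] [DecidableEq n]
    (M : Matrix m n F) :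
    ∃ (f : Fin (blockyRank M) → Matrix m n F) (c : Fin (blockyRank M) → F),
      (∀ i, IsBlocky (f i)) ∧ ∑ i, c i • f i = M := by
  have hne : {r | ∃ (f : Fin r → Matrix m n F) (c : Fin r → F),
      (∀ i, IsBlocky (f i)) ∧ ∑ i, c i • f i = M}.Nonempty := by
    classical
    set e := (Fintype.equivFin (m × n)).symm with he
    refine ⟨Fintype.card (m × n),
      fun l => (fun x y => if x = (e l).1 ∧ y = (e l).2 then (1:F) else 0),
      fun l => M (e l).1 (e l).2, fun l => isBlocky_single _ _, ?_⟩
    show ∑ l, M (e l).1 (e l).2 •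
        (fun x y => if x = (e l).1 ∧ y = (e l).2 then (1:F) else 0 : Matrix m n F) = M
    rw [Equiv.sum_comp e
      (fun q => M q.1 q.2 • (fun x y => if x = q.1 ∧ y = q.2 then (1:F) else 0 : Matrix m n F))]
    ext x y
    erw [Matrix.sum_apply]
    rw [Fintype.sum_prod_type]
    simp [Matrix.smul_apply, mul_ite, ite_and, Finset.sum_ite_eq, Finset.sum_ite_eq',
      eq_comm]
  exact Nat.sInf_mem hne

lemma blockyRank_zero : blockyRank (0 : Matrix m n F) = 0 :=
  Nat.le_zero.mp (blockyRank_le Fin.elim0 Fin.elim0 (fun i => i.elim0) (by simp))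

lemma blockyRank_add_le [Fintype m] [Fintype n] [DecidableEq m] [DecidableEq n]
    (A B : Matrix m n F) : blockyRank (A + B) ≤ blockyRank A + blockyRank B := by
  obtain ⟨f, c, hf, hsum⟩ := exists_blocky_decomp A
  obtain ⟨g, d, hg, hsum'⟩ := exists_blocky_decomp B
  refine blockyRank_le (Fin.append f g) (Fin.append c d) ?_ ?_
  · intro i
    refine Fin.addCases (fun l => ?_) (fun l => ?_) i
    · rw [Fin.append_left]; exact hf l
    · rw [Fin.append_right]; exact hg l
  · rw [Fin.sum_univ_add]
    simp only [Fin.append_left, Fin.append_right]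
    rw [hsum, hsum']

lemma blockyRank_smul_le [Fintype m] [Fintype n] [DecidableEq m] [DecidableEq n]
    (c : F) (A : Matrix m n F) : blockyRank (c • A) ≤ blockyRank A := by
  obtain ⟨f, d, hf, hsum⟩ := exists_blocky_decomp A
  refine blockyRank_le f (fun i => c * d i) hf ?_
  show ∑ i, (c * d i) • f i = c • A
  conv_rhs => rw [← hsum]
  rw [Finset.smul_sum]
  simp [smul_smul]

lemma blockyRank_sum_le [Fintype m] [Fintype n] [DecidableEq m] [DecidableEq n]
    {ι : Type*} (s : Finset ι) (A : ι → Matrix m n F) :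
    blockyRank (∑ i ∈ s, A i) ≤ ∑ i ∈ s, blockyRank (A i) := by
  classical
  induction s using Finset.induction with
  | empty => simp [blockyRank_zero]
  | insert _ _ hx ih =>
      rw [Finset.sum_insert hx, Finset.sum_insert hx]
      exact le_trans (blockyRank_add_le _ _) (by omega)

lemma blockyRank_hadamard_le [Fintype m] [Fintype n] [DecidableEq m] [DecidableEq n]
    (A B : Matrix m n F) :
    blockyRank (fun i j => A i j * B i j : Matrix m n F) ≤ blockyRank A * blockyRank B := by
  obtain ⟨f, c, hf, hsum⟩ := exists_blocky_decomp A
  obtain ⟨g, d, hg, hsum'⟩ := exists_blocky_decomp B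
  refine blockyRank_le
    (fun l => fun i j => f (finProdFinEquiv.symm l).1 i j * g (finProdFinEquiv.symm l).2 i j)
    (fun l => c (finProdFinEquiv.symm l).1 * d (finProdFinEquiv.symm l).2)
    (fun l => isBlocky_mul (hf _) (hg _)) ?_
  refine Eq.trans (Equiv.sum_comp finProdFinEquiv
    (fun l => (c (finProdFinEquiv.symm l).1 * d (finProdFinEquiv.symm l).2) •
      (fun i j => f (finProdFinEquiv.symm l).1 i j * g (finProdFinEquiv.symm l).2 i j
        : Matrix m n F))).symm ?_
  simp only [Equiv.symm_apply_apply]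
  funext x y
  have hA : A x y = ∑ l, c l * f l x y := by
    conv_lhs => rw [← hsum]
    rw [Matrix.sum_apply]; simp
  have hB : B x y = ∑ l, d l * g l x y := by
    conv_lhs => rw [← hsum']
    rw [Matrix.sum_apply]; simp
  show (∑ p : Fin (blockyRank A) × Fin (blockyRank B), (c p.1 * d p.2) •
      (fun i j => f p.1 i j * g p.2 i j : Matrix m n F)) x y = A x y * B x y
  erw [Matrix.sum_apply]
  rw [hA, hB, Finset.sum_mul_sum, Fintype.sum_prod_type]
  refine Finset.sum_congr rfl fun l _ => Finset.sum_congr rfl fun l' _ => ?_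
  show (c l * d l') * (f l x y * g l' x y) = c l * f l x y * (d l' * g l' x y)
  ring

end Aux2

section Aux3
variable {F : Type*} [Field F] {m n : Type*} [Fintype m] [Fintype n]
  [DecidableEq m] [DecidableEq n]

lemma blockyRank_pow_le (M : Matrix m n F) (k : ℕ) :
    blockyRank (fun i j => M i j ^ (k + 1) : Matrix m n F) ≤ blockyRank M ^ (k + 1) := by
  induction k with
  | zero => simpa using le_refl (blockyRank M)
  | succ k ih =>
      have h : (fun i j => M i j ^ (k + 1 + 1) : Matrix m n F)
          = fun i j => M i j * M i j ^ (k + 1) := by funext i j; ring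
      rw [h]
      calc blockyRank (fun i j => M i j * M i j ^ (k + 1) : Matrix m n F)
          ≤ blockyRank M * blockyRank (fun i j => M i j ^ (k+1) : Matrix m n F) :=
            blockyRank_hadamard_le _ _
        _ ≤ blockyRank M * blockyRank M ^ (k+1) := Nat.mul_le_mul_left _ ih
        _ = blockyRank M ^ (k+1+1) := by ring

end Aux3


/-- Blocky rank of an entrywise polynomial image: br(p(M)) ≤ br(M)^(deg p) * deg p
for polynomials with zero constant term. -/
theorem blockyRank_polynomial_apply {a b : ℕ} (M : Matrix (Fin a) (Fin b) ℝ)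
    (p : Polynomial ℝ) (hp : p.coeff 0 = 0) :
    blockyRank (Matrix.of fun i j => p.eval (M i j)) ≤
      blockyRank M ^ p.natDegree * p.natDegree := by
  classical
  set d := p.natDegree with hd
  by_cases h0 : blockyRank M = 0
  · obtain ⟨f, c, hf, hsum⟩ := exists_blocky_decomp M
    haveI : IsEmpty (Fin (blockyRank M)) := by rw [h0]; infer_instance
    have hM : M = 0 := by rw [← hsum, Finset.univ_eq_empty, Finset.sum_empty]
    have hz : (Matrix.of fun i j => p.eval (M i j)) = 0 := by
      funext i j
      have : p.eval (0:ℝ) = 0 := by rw [← Polynomial.coeff_zero_eq_eval_zero, hp]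
      simp [hM, this]
    rw [hz, blockyRank_zero]
    exact Nat.zero_le _
  · have h1 : 1 ≤ blockyRank M := Nat.one_le_iff_ne_zero.mpr h0
    have key : (Matrix.of fun i j => p.eval (M i j))
        = ∑ k ∈ Finset.range d,
            p.coeff (k+1) • (fun i j => M i j ^ (k+1) : Matrix (Fin a) (Fin b) ℝ) := by
      ext i j
      erw [Matrix.sum_apply]
      simp only [Matrix.of_apply, Matrix.smul_apply, smul_eq_mul]
      rw [Polynomial.eval_eq_sum_range, Finset.sum_range_succ']
      simp [hp, hd]
    rw [key]
    calc blockyRank (∑ k ∈ Finset.range d,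
            p.coeff (k+1) • (fun i j => M i j ^ (k+1) : Matrix (Fin a) (Fin b) ℝ))
        ≤ ∑ k ∈ Finset.range d, blockyRank
            (p.coeff (k+1) • (fun i j => M i j ^ (k+1) : Matrix (Fin a) (Fin b) ℝ)) :=
          blockyRank_sum_le _ _
      _ ≤ ∑ _k ∈ Finset.range d, blockyRank M ^ d := by
          refine Finset.sum_le_sum fun k hk => ?_
          refine le_trans (blockyRank_smul_le _ _) (le_trans (blockyRank_pow_le M k) ?_)
          exact Nat.pow_le_pow_right h1 (Nat.succ_le_of_lt (Finset.mem_range.mp hk))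
      _ = blockyRank M ^ d * d := by simp [Finset.sum_const, mul_comm]
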